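/- The relative error of Integrator F, E(s) = 1 - (e^{-sh} + (2h/3)s + (h/3)s e^{-sh} - (h²/6)s²), has a zero of order at least 4 at s = 0. -/

import Mathlib

open Complex

private lemma hexp (h : ℝ) : ∀ s : ℂ, HasDerivAt (fun s : ℂ => Complex.exp (-s * h))
    (-h * Complex.exp (-s * h)) s := by
  intro s
  have := ((hasDerivAt_id s).neg.mul_const (h : ℂ)).cexp
  refine this.congr_deriv ?_
  simp only [id_eq, Pi.neg_apply]
  ring

theorem stmt14 (h : ℝ) (hh : 0 < h) (E : ℂ → ℂ)
    (hE : E = fun s => 1 - (Complex.exp (-s * h) + (2 * (h : ℂ) / 3) * s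
      + ((h : ℂ) / 3) * s * Complex.exp (-s * h) - ((h : ℂ) ^ 2 / 6) * s ^ 2)) :
    ∀ k ≤ 3, iteratedDeriv k E 0 = 0 := by
  set f1 : ℂ → ℂ := fun s => (2 * (h : ℂ) / 3) * Complex.exp (-s * h)
    + ((h : ℂ) ^ 2 / 3) * s * Complex.exp (-s * h) + ((h : ℂ) ^ 2 / 3) * s - 2 * h / 3 with hf1
  set f2 : ℂ → ℂ := fun s => -((h : ℂ) ^ 2 / 3) * Complex.exp (-s * h)
    - ((h : ℂ) ^ 3 / 3) * s * Complex.exp (-s * h) + (h : ℂ) ^ 2 / 3 with hf2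
  have hd1 : deriv E = f1 := by
    funext s
    have H : HasDerivAt E (f1 s) s := by
      rw [hE]
      have A := hexp h s
      have B := (hasDerivAt_id s).const_mul (2 * (h : ℂ) / 3)
      have C := ((hasDerivAt_id s).const_mul ((h : ℂ) / 3)).mul A
      have D := (hasDerivAt_pow 2 s).const_mul ((h : ℂ) ^ 2 / 6)
      have := (hasDerivAt_const s (1 : ℂ)).sub (((A.add B).add C).sub D)
      refine this.congr_deriv ?_
      simp [hf1]
      ring
    exact H.deriv
  have hd2 : deriv f1 = f2 := by
    funext s
    have H : HasDerivAt f1 (f2 s) s := by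
      have A := (hexp h s).const_mul (2 * (h : ℂ) / 3)
      have C := ((hasDerivAt_id s).const_mul ((h : ℂ) ^ 2 / 3)).mul (hexp h s)
      have B := (hasDerivAt_id s).const_mul ((h : ℂ) ^ 2 / 3)
      have := ((A.add C).add B).sub_const (2 * (h : ℂ) / 3)
      refine this.congr_deriv ?_
      simp [hf2]
      ring
    exact H.deriv
  intro k hk
  interval_cases k
  · simp [iteratedDeriv_zero, hE]
  · simp [iteratedDeriv_one, hd1, hf1]
  · rw [show (2 : ℕ) = 1 + 1 by rfl, iteratedDeriv_succ, iteratedDeriv_one, hd1, hd2]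
    simp [hf2]
  · rw [show (3 : ℕ) = 2 + 1 by rfl, iteratedDeriv_succ,
      show (2 : ℕ) = 1 + 1 by rfl, iteratedDeriv_succ, iteratedDeriv_one, hd1, hd2]
    have H : HasDerivAt f2 0 0 := by
      have A := (hexp h 0).const_mul (-((h : ℂ) ^ 2 / 3))
      have C := ((hasDerivAt_id (0:ℂ)).const_mul ((h : ℂ) ^ 3 / 3)).mul (hexp h 0)
      have := (A.sub C).add_const ((h : ℂ) ^ 2 / 3)
      refine this.congr_deriv ?_
      simp
      ring
    exact H.deriv
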